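/- Let Φ, Φ' be solutions to the matrix ODEs Φ̇(t) = A(x(t))Φ(t), Φ'(t)' = A(x'(t))Φ'(t) with Φ(0) = Φ'(0) = I, where x' is a measure-preserving rearrangement of x. If the family {A(x) : x ∈ 𝒳} is commuting, then Φ(T) = Φ'(T). -/

import Mathlib

section Aux

open Set Filter MeasureTheory intervalIntegral
open scoped Topology

/-- Key ODE lemma in a general Banach algebra: if `g' = f t * g` on `[0,T]` with `g 0 = 1`
and the values of `f` pairwise commute, then `g T = exp (∫₀ᵀ f)`. -/
theorem key_ode_aux {𝔸 : Type*} [NormedRing 𝔸] [NormedAlgebra ℝ 𝔸] [CompleteSpace 𝔸]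
    {T : ℝ} (hT : 0 ≤ T) (f : ℝ → 𝔸) (hf : Continuous f)
    (hc : ∀ s t : ℝ, Commute (f s) (f t))
    (g : ℝ → 𝔸) (hg0 : g 0 = 1)
    (hg : ∀ t ∈ Set.Icc 0 T, HasDerivAt g (f t * g t) t) :
    g T = NormedSpace.exp (∫ τ in (0:ℝ)..T, f τ) := by
  set B : ℝ → 𝔸 := fun t => ∫ τ in (0:ℝ)..t, f τ with hBdef
  have hB : ∀ t : ℝ, HasDerivAt B (f t) t := fun t =>
    (hf.integral_hasStrictDerivAt 0 t).hasDerivAt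
  have hfB : ∀ s t : ℝ, Commute (f s) (B t) := by
    intro s t
    have h1 := (ContinuousLinearMap.mul ℝ 𝔸 (f s)).intervalIntegral_comp_comm
      (hf.intervalIntegrable (μ := MeasureTheory.volume) 0 t)
    have h2 := ((ContinuousLinearMap.mul ℝ 𝔸).flip (f s)).intervalIntegral_comp_comm
      (hf.intervalIntegrable (μ := MeasureTheory.volume) 0 t)
    simp only [ContinuousLinearMap.mul_apply', ContinuousLinearMap.flip_apply] at h1 h2
    show f s * B t = B t * f s
    rw [hBdef, ← h1, ← h2]
    exact intervalIntegral.integral_congr fun τ _ => (hc s τ).eq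
  have hBB : ∀ s t : ℝ, Commute (B s) (B t) := by
    intro s t
    have h1 := (ContinuousLinearMap.mul ℝ 𝔸 (B s)).intervalIntegral_comp_comm
      (hf.intervalIntegrable (μ := MeasureTheory.volume) 0 t)
    have h2 := ((ContinuousLinearMap.mul ℝ 𝔸).flip (B s)).intervalIntegral_comp_comm
      (hf.intervalIntegrable (μ := MeasureTheory.volume) 0 t)
    simp only [ContinuousLinearMap.mul_apply', ContinuousLinearMap.flip_apply] at h1 h2
    show B s * B t = B t * B s
    conv_lhs => rw [hBdef]
    conv_rhs => rw [hBdef]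
    rw [← h1, ← h2]
    exact intervalIntegral.integral_congr fun τ _ => ((hfB τ s).symm).eq
  have hE : ∀ t : ℝ,
      HasDerivAt (fun s => NormedSpace.exp (B s)) (f t * NormedSpace.exp (B t)) t := by
    intro t
    have h1 : HasDerivAt (fun s => B s - B t) (f t) t := (hB t).sub_const _
    have h2 : HasFDerivAt (NormedSpace.exp) (1 : 𝔸 →L[ℝ] 𝔸) (B t - B t) := by
      rw [sub_self]; exact hasFDerivAt_exp_zero
    have h3 : HasDerivAt (fun s => NormedSpace.exp (B s - B t)) (f t) t := by
      simpa [Function.comp_def] using h2.comp_hasDerivAt t h1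
    have h4 := h3.const_mul (NormedSpace.exp (B t))
    have h5 : (fun s => NormedSpace.exp (B t) * NormedSpace.exp (B s - B t))
        = fun s => NormedSpace.exp (B s) := by
      funext s
      rw [← NormedSpace.exp_add_of_commute_of_mem_ball (𝕂 := ℝ) ((hBB t s).sub_right (Commute.refl (B t)))
          ((NormedSpace.expSeries_radius_eq_top ℝ 𝔸).symm ▸ edist_lt_top _ _)
          ((NormedSpace.expSeries_radius_eq_top ℝ 𝔸).symm ▸ edist_lt_top _ _),
        add_sub_cancel]
    rw [h5] at h4
    rw [((hfB t t).exp_right).eq]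
    exact h4
  -- Lipschitz setup
  obtain ⟨C, hC⟩ : ∃ C, ∀ t ∈ Set.Icc (0:ℝ) T, ‖f t‖ ≤ C :=
    isCompact_Icc.exists_bound_of_continuousOn hf.continuousOn
  set K : NNReal := ⟨max C 0, le_max_right _ _⟩ with hK
  set proj : ℝ → ℝ := fun t => min (max t 0) T with hprojdef
  have hprojmem : ∀ t, proj t ∈ Set.Icc (0:ℝ) T := fun t =>
    ⟨le_min (le_max_right _ _) hT, min_le_right _ _⟩
  have hproj : ∀ t ∈ Set.Icc (0:ℝ) T, proj t = t := by
    intro t ht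
    simp only [hprojdef]
    rw [max_eq_left ht.1, min_eq_left ht.2]
  set v : ℝ → 𝔸 → 𝔸 := fun t y => f (proj t) * y with hv
  have hvlip : ∀ t, LipschitzOnWith K (v t) Set.univ := by
    intro t
    apply LipschitzWith.lipschitzOnWith
    have hlip : LipschitzWith ‖ContinuousLinearMap.mul ℝ 𝔸 (f (proj t))‖₊ (v t) := by
      have := (ContinuousLinearMap.mul ℝ 𝔸 (f (proj t))).lipschitz
      exact this
    apply hlip.weaken
    rw [← NNReal.coe_le_coe]
    calc (‖ContinuousLinearMap.mul ℝ 𝔸 (f (proj t))‖₊ : ℝ)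
        = ‖ContinuousLinearMap.mul ℝ 𝔸 (f (proj t))‖ := rfl
      _ ≤ ‖f (proj t)‖ := ContinuousLinearMap.opNorm_mul_apply_le _ _ _
      _ ≤ C := hC _ (hprojmem t)
      _ ≤ max C 0 := le_max_left _ _
  have huniq := ODE_solution_unique_of_mem_Icc_right (v := v) (s := fun _ => Set.univ)
    (K := K) (fun t _ => hvlip t)
    (f := g) (g := fun s => NormedSpace.exp (B s)) (a := 0) (b := T)
    (fun t ht => (hg t ht).continuousAt.continuousWithinAt)
    (fun t ht => by
      have := (hg t (Set.Ico_subset_Icc_self ht)).hasDerivWithinAt (s := Set.Ici t)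
      show HasDerivWithinAt g (f (proj t) * g t) (Set.Ici t) t
      rwa [hproj t (Set.Ico_subset_Icc_self ht)])
    (fun t _ => Set.mem_univ _)
    (fun t _ => ((hE t).continuousAt.continuousWithinAt))
    (fun t ht => by
      have := (hE t).hasDerivWithinAt (s := Set.Ici t)
      show HasDerivWithinAt (fun s => NormedSpace.exp (B s)) (f (proj t) *
        NormedSpace.exp (B t)) (Set.Ici t) t
      rwa [hproj t (Set.Ico_subset_Icc_self ht)])
    (fun t _ => Set.mem_univ _)
    (by
      show g 0 = NormedSpace.exp (B 0)
      rw [hg0, hBdef]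
      simp [NormedSpace.exp_zero])
  exact huniq (Set.right_mem_Icc.mpr hT)

end Aux

section MatrixAux

open Set Filter MeasureTheory intervalIntegral
open scoped Topology

attribute [local instance] Matrix.linftyOpNormedAddCommGroup Matrix.linftyOpNormedSpace
  Matrix.linftyOpNormedRing Matrix.linftyOpNormedAlgebra

theorem matrix_flow_aux (n : ℕ) (T : ℝ) (hT : 0 ≤ T)
    (F : ℝ → Matrix (Fin n) (Fin n) ℝ) (hF : Continuous F)
    (hc : ∀ s t : ℝ, Commute (F s) (F t))
    (g : ℝ → Matrix (Fin n) (Fin n) ℝ) (hg0 : g 0 = 1)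
    (hg : ∀ t ∈ Set.Icc 0 T, Filter.Tendsto (slope g t) (𝓝[≠] t) (𝓝 (F t * g t))) :
    g T = NormedSpace.exp (∫ τ in (0:ℝ)..T, F τ) := by
  haveI : CompleteSpace (Matrix (Fin n) (Fin n) ℝ) := FiniteDimensional.complete ℝ _
  exact key_ode_aux hT F hF hc g hg0
    (fun t ht => hasDerivAt_iff_tendsto_slope.mpr (hg t ht))

theorem matrix_integral_rearrange (n : ℕ) (T : ℝ) (hT : 0 ≤ T)
    (F G : ℝ → Matrix (Fin n) (Fin n) ℝ) (σ : ℝ → ℝ)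
    (hσ : MeasurePreserving σ (volume.restrict (Set.Icc 0 T)) (volume.restrict (Set.Icc 0 T)))
    (hFG : ∀ t ∈ Set.Icc (0:ℝ) T, G t = F (σ t))
    (hF : Continuous F) :
    (∫ τ in (0:ℝ)..T, G τ) = ∫ τ in (0:ℝ)..T, F τ := by
  rw [intervalIntegral.integral_of_le hT, intervalIntegral.integral_of_le hT,
    ← MeasureTheory.integral_Icc_eq_integral_Ioc, ← MeasureTheory.integral_Icc_eq_integral_Ioc]
  calc (∫ t in Set.Icc (0:ℝ) T, G t) = ∫ t in Set.Icc (0:ℝ) T, F (σ t) :=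
        setIntegral_congr_fun measurableSet_Icc hFG
    _ = ∫ t in Set.Icc (0:ℝ) T, F t := by
        conv_rhs => rw [← hσ.map_eq]
        haveI : TopologicalSpace.PseudoMetrizableSpace (Matrix (Fin n) (Fin n) ℝ) :=
          inferInstanceAs (TopologicalSpace.PseudoMetrizableSpace (Fin n → Fin n → ℝ))
        rw [integral_map hσ.measurable.aemeasurable hF.aestronglyMeasurable]

end MatrixAux

attribute [local instance] Matrix.normedAddCommGroup Matrix.normedSpace

open MeasureTheory

/-- For a commuting family of generators, the fundamental solution at time `T` is invariant
under measure-preserving rearrangement of the input path: if `Φ̇ = A(x(t))Φ`,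
`Φ'̇ = A(x'(t))Φ'`, `Φ(0) = Φ'(0) = I`, and `x' = x ∘ σ` for a measure-preserving bijection
`σ` of `[0,T]`, then `Φ(T) = Φ'(T)`. -/
theorem commuting_flow_rearrangement_invariant
    (n : ℕ) (𝒳 : Type*) (T : ℝ) (hT : 0 ≤ T)
    (A : 𝒳 → Matrix (Fin n) (Fin n) ℝ)
    (hcomm : ∀ x y : 𝒳, A x * A y = A y * A x)
    (x x' : ℝ → 𝒳) (σ : ℝ → ℝ)
    (hσ : MeasurePreserving σ (volume.restrict (Set.Icc 0 T)) (volume.restrict (Set.Icc 0 T)))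
    (hσbij : Set.BijOn σ (Set.Icc 0 T) (Set.Icc 0 T))
    (hxx' : ∀ t ∈ Set.Icc (0 : ℝ) T, x' t = x (σ t))
    (hAx : Continuous fun t => A (x t))
    (hAx' : Continuous fun t => A (x' t))
    (Φ Φ' : ℝ → Matrix (Fin n) (Fin n) ℝ)
    (hΦ0 : Φ 0 = 1) (hΦ'0 : Φ' 0 = 1)
    (hΦ : ∀ t ∈ Set.Icc (0 : ℝ) T, HasDerivAt Φ (A (x t) * Φ t) t)
    (hΦ' : ∀ t ∈ Set.Icc (0 : ℝ) T, HasDerivAt Φ' (A (x' t) * Φ' t) t) :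
    Φ T = Φ' T := by
  have h1 := matrix_flow_aux n T hT (fun t => A (x t)) hAx (fun s t => hcomm _ _) Φ hΦ0
    (fun t ht => hasDerivAt_iff_tendsto_slope.mp (hΦ t ht))
  have h2 := matrix_flow_aux n T hT (fun t => A (x' t)) hAx' (fun s t => hcomm _ _) Φ' hΦ'0
    (fun t ht => hasDerivAt_iff_tendsto_slope.mp (hΦ' t ht))
  rw [h1, h2, matrix_integral_rearrange n T hT (fun t => A (x t)) (fun t => A (x' t)) σ hσ
    (fun t ht => congrArg A (hxx' t ht)) hAx]
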